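/- There exist sets Z ⊆ ℝ² and E ⊆ ℝ² such that the Lebesgue measure of ℝ² \ E is zero, the characteristic function χ_Z of Z is, at each point of E, differentiable in almost every direction, and χ_Z is at no point x ∈ ℝ² Lipschitz relative to E. -/

import Mathlib

open Metric MeasureTheory Filter Set

noncomputable section

/-- The Euclidean plane. -/
abbrev E2 := EuclideanSpace ℝ (Fin 2)

/-- `f` is differentiable at `x` in direction `u`: the one-sided limit
`lim_{h→0+} (f(x+hu)−f(x))/h` exists and is finite. -/
def DiffAtInDir (f : E2 → ℝ) (x u : E2) : Prop :=
  ∃ L : ℝ, Filter.Tendsto (fun h : ℝ => (f (x + h • u) - f x) / h)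
    (nhdsWithin (0 : ℝ) (Set.Ioi 0)) (nhds L)

/-- `f` is differentiable at `x` in almost every direction: the set of unit directions in which
it fails to be differentiable at `x` has zero one-dimensional Hausdorff measure. -/
def DiffAEDirs (f : E2 → ℝ) (x : E2) : Prop :=
  MeasureTheory.Measure.hausdorffMeasure 1
    {u : E2 | u ∈ Metric.sphere (0 : E2) 1 ∧ ¬ DiffAtInDir f x u} = 0

/-- `f` is Lipschitz at `x` relative to `M`: either `x` is not a limit point of `M`, or
`limsup_{y→x, y∈M} |f(y)−f(x)|/‖y−x‖ < ∞`. -/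
def LipAtRel (f : E2 → ℝ) (x : E2) (M : Set E2) : Prop :=
  x ∉ closure (M \ {x}) ∨
  Filter.IsBoundedUnder (· ≤ ·) (nhdsWithin x (M \ {x}))
    (fun y : E2 => |f y - f x| / ‖y - x‖)

open scoped ENNReal NNReal

namespace Hedge

def pt (a b : ℝ) : E2 := (WithLp.equiv 2 (Fin 2 → ℝ)).symm ![a, b]

@[simp] lemma pt_apply0 (a b : ℝ) : pt a b 0 = a := rfl
@[simp] lemma pt_apply1 (a b : ℝ) : pt a b 1 = b := rfl

lemma eq_pt (x : E2) : x = pt (x 0) (x 1) := by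
  ext i; fin_cases i <;> rfl

lemma dist_pt_eq (a b c d : ℝ) : dist (pt a b) (pt c d) = Real.sqrt ((a-c)^2 + (b-d)^2) := by
  rw [EuclideanSpace.dist_eq]
  simp [Fin.sum_univ_two, Real.dist_eq, sq_abs]

lemma dist_eq_coords (x y : E2) : dist x y = Real.sqrt ((x 0 - y 0)^2 + (x 1 - y 1)^2) := by
  rw [eq_pt x, eq_pt y, dist_pt_eq]; simp

lemma coord_le_dist (x y : E2) (i : Fin 2) : |x i - y i| ≤ dist x y := by
  rw [EuclideanSpace.dist_eq]
  have h1 : |x i - y i| = Real.sqrt (dist (x i) (y i) ^2) := by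
    rw [Real.sqrt_sq_eq_abs]; simp [Real.dist_eq]
  rw [h1]
  apply Real.sqrt_le_sqrt
  exact Finset.single_le_sum (f := fun j => dist (x j) (y j)^2) (fun j _ => sq_nonneg _) (Finset.mem_univ i)

lemma dist_le_coords (x y : E2) : dist x y ≤ |x 0 - y 0| + |x 1 - y 1| := by
  rw [dist_eq_coords]
  have h : (x 0 - y 0)^2 + (x 1 - y 1)^2 ≤ (|x 0 - y 0| + |x 1 - y 1|)^2 := by
    have := abs_nonneg (x 0 - y 0); have := abs_nonneg (x 1 - y 1)
    nlinarith [sq_abs (x 0 - y 0), sq_abs (x 1 - y 1), mul_nonneg (abs_nonneg (x 0 - y 0)) (abs_nonneg (x 1 - y 1))]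
  calc Real.sqrt ((x 0 - y 0)^2 + (x 1 - y 1)^2) ≤ Real.sqrt ((|x 0 - y 0| + |x 1 - y 1|)^2) := Real.sqrt_le_sqrt h
  _ = _ := Real.sqrt_sq (by positivity)

lemma vol_ball2 (x : E2) (r : ℝ) : volume (ball x r) = ENNReal.ofReal r ^ 2 * ENNReal.ofReal Real.pi := by
  rw [EuclideanSpace.volume_ball]
  norm_num
  rw [← ENNReal.ofReal_pow (Real.sqrt_nonneg _), Real.sq_sqrt Real.pi_nonneg]

lemma vol_cball2 (x : E2) (r : ℝ) : volume (closedBall x r) = ENNReal.ofReal r ^ 2 * ENNReal.ofReal Real.pi := by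
  rw [EuclideanSpace.volume_closedBall]
  norm_num
  rw [← ENNReal.ofReal_pow (Real.sqrt_nonneg _), Real.sq_sqrt Real.pi_nonneg]

/-- radius of level-j balls -/
def rad (j : ℕ) : ℝ := 1 / (100 * 3 ^ (j^2))

lemma rad_pos (j : ℕ) : 0 < rad j := by unfold rad; positivity

lemma rad_anti {l m : ℕ} (h : l ≤ m) : rad m ≤ rad l := by
  unfold rad
  apply one_div_le_one_div_of_le (by positivity)
  have : (3:ℝ)^(l^2) ≤ 3^(m^2) := by
    apply pow_le_pow_right₀ (by norm_num) (Nat.pow_le_pow_left h 2)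
  linarith

lemma rad_strict_anti {l m : ℕ} (h : l < m) : rad m < rad l := by
  unfold rad
  apply one_div_lt_one_div_of_lt (by positivity)
  have : (3:ℝ)^(l^2) < 3^(m^2) := by
    apply pow_lt_pow_right₀ (by norm_num) (Nat.pow_lt_pow_left h (by norm_num))
  linarith

lemma rad_le_pow (j : ℕ) : rad j ≤ (1/2)^j / 100 := by
  unfold rad
  rw [div_le_div_iff₀ (by positivity) (by norm_num)]
  have h1 : (2:ℝ)^j ≤ 3^(j^2) := by
    calc (2:ℝ)^j ≤ 3^j := by gcongr; norm_num
    _ ≤ 3^(j^2) := by gcongr; norm_num; exact Nat.le_self_pow (by norm_num) j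
  rw [one_div, inv_pow, ← one_div]
  rw [div_mul_eq_mul_div, le_div_iff₀ (by positivity)]
  nlinarith [pow_pos (show (0:ℝ) < 3 by norm_num) (j^2), pow_pos (show (0:ℝ) < 2 by norm_num) j]

lemma rad_le_one (j : ℕ) : rad j ≤ 1/100 := by
  have := rad_anti (Nat.zero_le j); unfold rad at this ⊢; simpa using this

lemma rad_succ_le (j : ℕ) : rad (j+1) ≤ rad j / 3 := by
  unfold rad
  rw [div_div]
  rw [div_le_div_iff₀ (by positivity) (by positivity)]
  have : (3:ℝ)^((j+1)^2) ≥ 3 * 3^(j^2) := by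
    have h : j^2 + 1 ≤ (j+1)^2 := by ring_nf; omega
    calc (3:ℝ)^((j+1)^2) ≥ 3^(j^2+1) := by gcongr; norm_num
    _ = 3 * 3^(j^2) := by ring
  nlinarith [pow_pos (show (0:ℝ) < 3 by norm_num) (j^2)]

/-- grid centers -/
def ctr (j : ℕ) (a b : ℤ) : E2 := pt ((a : ℝ)/2^j) ((b : ℝ)/2^j)

def cI (i : ℕ × ℤ × ℤ) : E2 := ctr i.1 i.2.1 i.2.2
def rI (i : ℕ × ℤ × ℤ) : ℝ := rad i.1

lemma coord_rewrite {k m : ℕ} (h : k ≤ m) (a : ℤ) :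
    (a : ℝ)/2^k = ((a * 2^(m-k) : ℤ) : ℝ)/2^m := by
  have h2 : (2:ℝ)^m = 2^k * 2^(m-k) := by
    rw [← pow_add]; congr 1; omega
  push_cast
  rw [h2]
  field_simp

lemma dist_ctr_sq {k l : ℕ} (a b a' b' : ℤ) :
    dist (ctr k a b) (ctr l a' b') ^ 2 =
      (((a * 2^(max k l - k) - a' * 2^(max k l - l) : ℤ) : ℝ)^2
        + ((b * 2^(max k l - k) - b' * 2^(max k l - l) : ℤ) : ℝ)^2) / (4 : ℝ)^(max k l) := by
  set m := max k l
  unfold ctr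
  rw [dist_pt_eq]
  rw [Real.sq_sqrt (by positivity)]
  rw [coord_rewrite (le_max_left k l) a, coord_rewrite (le_max_right k l) a',
      coord_rewrite (le_max_left k l) b, coord_rewrite (le_max_right k l) b']
  have h4 : (4:ℝ)^m = (2^m)^2 := by rw [← pow_mul, mul_comm, pow_mul]; norm_num
  rw [h4]
  push_cast
  field_simp
  try ring

lemma grid_sep {k l : ℕ} {a b a' b' : ℤ} (hne : ctr k a b ≠ ctr l a' b') :
    (1/2 : ℝ)^(max k l) ≤ dist (ctr k a b) (ctr l a' b') := by
  set m := max k l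
  set A := a * 2^(m - k) - a' * 2^(m - l) with hA
  set B := b * 2^(m - k) - b' * 2^(m - l) with hB
  have habs : A ≠ 0 ∨ B ≠ 0 := by
    by_contra h
    push_neg at h
    apply hne
    have h1 : (a:ℝ)/2^k = (a':ℝ)/2^l := by
      rw [coord_rewrite (le_max_left k l) a, coord_rewrite (le_max_right k l) a']
      have : a * 2^(m-k) = a' * 2^(m-l) := by omega
      rw [this]
    have h2 : (b:ℝ)/2^k = (b':ℝ)/2^l := by
      rw [coord_rewrite (le_max_left k l) b, coord_rewrite (le_max_right k l) b']
      have : b * 2^(m-k) = b' * 2^(m-l) := by omega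
      rw [this]
    unfold ctr
    rw [h1, h2]
  have hsq : dist (ctr k a b) (ctr l a' b') ^ 2 ≥ ((1/2:ℝ)^m)^2 := by
    rw [dist_ctr_sq]
    have hAB : ((A:ℝ)^2 + (B:ℝ)^2) ≥ 1 := by
      rcases habs with h | h
      · have h1 : (1:ℤ) ≤ A^2 := by nlinarith [Int.one_le_abs h, sq_abs A, abs_nonneg A]
        have : (1:ℝ) ≤ (A:ℝ)^2 := by exact_mod_cast h1
        nlinarith [sq_nonneg (B:ℝ)]
      · have h1 : (1:ℤ) ≤ B^2 := by nlinarith [Int.one_le_abs h, sq_abs B, abs_nonneg B]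
        have : (1:ℝ) ≤ (B:ℝ)^2 := by exact_mod_cast h1
        nlinarith [sq_nonneg (A:ℝ)]
    have h4 : ((1/2:ℝ)^m)^2 = 1/(4:ℝ)^m := by
      rw [← pow_mul, mul_comm m 2, pow_mul]
      norm_num
      rw [one_div, inv_pow]
    rw [h4, ge_iff_le, div_le_div_iff₀ (by norm_num) (by positivity)]
    nlinarith [pow_pos (show (0:ℝ) < 4 by norm_num) m]
  have h1 : (0:ℝ) ≤ (1/2:ℝ)^m := by positivity
  nlinarith [dist_nonneg (x := ctr k a b) (y := ctr l a' b')]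

/-- grid points never lie on any sphere of the family -/
lemma grid_off_sphere (k l : ℕ) (a b a' b' : ℤ) :
    dist (ctr k a b) (ctr l a' b') ≠ rad l := by
  intro h
  set m := max k l
  set A := a * 2^(m - k) - a' * 2^(m - l) with hA
  set B := b * 2^(m - k) - b' * 2^(m - l) with hB
  have hsq := dist_ctr_sq (k := k) (l := l) a b a' b'
  rw [h] at hsq
  unfold rad at hsq
  have h9 : ((1:ℝ) / (100 * 3^(l^2)))^2 = 1 / (10000 * 9^(l^2)) := by
    rw [div_pow]
    norm_num
    rw [mul_pow, ← pow_mul, mul_comm (l^2) 2, pow_mul]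
    norm_num
  rw [h9] at hsq
  -- cross-multiply to an integer identity
  rw [eq_comm, div_eq_div_iff (by positivity) (by positivity)] at hsq
  have key : ((A:ℝ)^2 + (B:ℝ)^2) * (10000 * 9^(l^2)) = (4:ℝ)^m := by
    rw [hA, hB]
    push_cast
    push_cast at hsq
    linarith [hsq]
  have keyZ : (A^2 + B^2) * (10000 * 9^(l^2)) = (4:ℤ)^m := by
    exact_mod_cast key
  have h5 : (5:ℤ) ∣ (4:ℤ)^m := by
    rw [← keyZ]
    exact ⟨(A^2+B^2) * (2000 * 9^(l^2)), by ring⟩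
  have : ¬ ((5:ℤ) ∣ (4:ℤ)^m) := by
    intro hd
    have hp : Prime (5:ℤ) := Int.prime_iff_natAbs_prime.mpr (by norm_num)
    have := hp.dvd_of_dvd_pow hd
    norm_num at this
  exact this h5


/-! ### counting boxes -/

def boxF (j : ℕ) (x : E2) (s : ℝ) : Finset (ℤ × ℤ) :=
  (Finset.Icc ⌈(x 0 - s)*2^j⌉ ⌊(x 0 + s)*2^j⌋) ×ˢ (Finset.Icc ⌈(x 1 - s)*2^j⌉ ⌊(x 1 + s)*2^j⌋)

lemma mem_boxF {j : ℕ} {x : E2} {s : ℝ} {a b : ℤ}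
    (h : dist x (ctr j a b) ≤ s) : (a, b) ∈ boxF j x s := by
  have h0 := coord_le_dist x (ctr j a b) 0
  have h1 := coord_le_dist x (ctr j a b) 1
  have hc0 : (ctr j a b) 0 = (a:ℝ)/2^j := rfl
  have hc1 : (ctr j a b) 1 = (b:ℝ)/2^j := rfl
  rw [hc0] at h0; rw [hc1] at h1
  have p2 : (0:ℝ) < 2^j := by positivity
  rw [abs_le] at h0 h1
  simp only [boxF, Finset.mem_product, Finset.mem_Icc]
  constructor
  · constructor
    · rw [Int.ceil_le]
      have : (x 0 - s) ≤ (a:ℝ)/2^j := by linarith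
      calc ((x 0 - s)*2^j) ≤ ((a:ℝ)/2^j)*2^j := by nlinarith
      _ = (a:ℝ) := by field_simp
    · rw [Int.le_floor]
      have : (a:ℝ)/2^j ≤ x 0 + s := by linarith
      calc (a:ℝ) = ((a:ℝ)/2^j)*2^j := by field_simp
      _ ≤ (x 0 + s)*2^j := by nlinarith
  · constructor
    · rw [Int.ceil_le]
      have : (x 1 - s) ≤ (b:ℝ)/2^j := by linarith
      calc ((x 1 - s)*2^j) ≤ ((b:ℝ)/2^j)*2^j := by nlinarith
      _ = (b:ℝ) := by field_simp
    · rw [Int.le_floor]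
      have : (b:ℝ)/2^j ≤ x 1 + s := by linarith
      calc (b:ℝ) = ((b:ℝ)/2^j)*2^j := by field_simp
      _ ≤ (x 1 + s)*2^j := by nlinarith

lemma card_boxF (j : ℕ) (x : E2) {s : ℝ} (hs : 0 ≤ s) :
    ((boxF j x s).card : ℝ) ≤ (2*s*2^j+1)^2 := by
  have key : ∀ c : ℝ, ((Finset.Icc ⌈(c - s)*2^j⌉ ⌊(c + s)*2^j⌋).card : ℝ) ≤ 2*s*2^j+1 := by
    intro c
    rw [Int.card_Icc]
    rcases le_or_gt (⌊(c + s)*2^j⌋ + 1 - ⌈(c - s)*2^j⌉) 0 with h | h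
    · rw [Int.toNat_of_nonpos h]
      have : (0:ℝ) ≤ 2*s*2^j := by positivity
      norm_num; linarith
    · have htn : ((Int.toNat (⌊(c + s)*2^j⌋ + 1 - ⌈(c - s)*2^j⌉)) : ℝ)
          = ((⌊(c + s)*2^j⌋ + 1 - ⌈(c - s)*2^j⌉ : ℤ) : ℝ) := by
        have := Int.toNat_of_nonneg h.le
        exact_mod_cast congrArg (fun z : ℤ => (z : ℝ)) this
      rw [htn]
      push_cast
      have h1 : ((⌊(c + s)*2^j⌋ : ℤ) : ℝ) ≤ (c+s)*2^j := Int.floor_le _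
      have h2 : ((c - s)*2^j) ≤ ((⌈(c - s)*2^j⌉ : ℤ) : ℝ) := Int.le_ceil _
      have p2 : (0:ℝ) < 2^j := by positivity
      nlinarith
  simp only [boxF, Finset.card_product]
  push_cast
  have k0 := key (x 0)
  have k1 := key (x 1)
  have c0 : (0:ℝ) ≤ ((Finset.Icc ⌈(x 0 - s)*2^j⌉ ⌊(x 0 + s)*2^j⌋).card : ℝ) := by positivity
  have c1 : (0:ℝ) ≤ ((Finset.Icc ⌈(x 1 - s)*2^j⌉ ⌊(x 1 + s)*2^j⌋).card : ℝ) := by positivity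
  have hb : (0:ℝ) ≤ 2*s*2^j+1 := by positivity
  calc ((Finset.Icc ⌈(x 0 - s)*2^j⌉ ⌊(x 0 + s)*2^j⌋).card : ℝ) * ((Finset.Icc ⌈(x 1 - s)*2^j⌉ ⌊(x 1 + s)*2^j⌋).card : ℝ)
      ≤ (2*s*2^j+1) * (2*s*2^j+1) := by exact mul_le_mul k0 k1 c1 hb
  _ = (2*s*2^j+1)^2 := by ring

lemma vol_grid_balls (j : ℕ) (x : E2) {s r : ℝ} (hs : 0 ≤ s) (hr : 0 ≤ r) :
    volume (⋃ p ∈ boxF j x s, ball (ctr j p.1 p.2) r)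
      ≤ ENNReal.ofReal ((2*s*2^j+1)^2 * (r^2 * Real.pi)) := by
  calc volume (⋃ p ∈ boxF j x s, ball (ctr j p.1 p.2) r)
      ≤ ∑ p ∈ boxF j x s, volume (ball (ctr j p.1 p.2) r) := measure_biUnion_finset_le _ _
  _ = (boxF j x s).card * (ENNReal.ofReal r ^ 2 * ENNReal.ofReal Real.pi) := by
      rw [Finset.sum_congr rfl (fun p _ => vol_ball2 _ r)]
      rw [Finset.sum_const, nsmul_eq_mul]
  _ ≤ ENNReal.ofReal ((2*s*2^j+1)^2) * (ENNReal.ofReal r ^ 2 * ENNReal.ofReal Real.pi) := by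
      gcongr
      have := card_boxF j x hs
      calc ((boxF j x s).card : ℝ≥0∞) = ENNReal.ofReal ((boxF j x s).card : ℝ) := by
            rw [ENNReal.ofReal_natCast]
      _ ≤ ENNReal.ofReal ((2*s*2^j+1)^2) := ENNReal.ofReal_le_ofReal this
  _ = ENNReal.ofReal ((2*s*2^j+1)^2 * (r^2 * Real.pi)) := by
      rw [ENNReal.ofReal_mul (by positivity : (0:ℝ) ≤ (2*s*2^j+1)^2),
          ENNReal.ofReal_mul (by positivity : (0:ℝ) ≤ r^2), ENNReal.ofReal_pow hr]

/-! ### the two sets -/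

def Kset (x : E2) : Set (ℕ × ℤ × ℤ) := {i | x ∈ ball (cI i) (rI i)}

def ZZ : Set E2 := {x | Odd (Kset x).ncard}

def ff : E2 → ℝ := Set.indicator ZZ (fun _ => (1:ℝ))

def tau (j : ℕ) : ℝ := (1/8)^j

lemma tau_pos (j : ℕ) : 0 < tau j := by unfold tau; positivity

def EE : Set E2 := {x | (∀ i : ℕ × ℤ × ℤ, dist x (cI i) ≠ rI i ∧ x ≠ cI i) ∧
    ∃ J, ∀ j, J ≤ j → ∀ a b : ℤ, tau j ≤ dist x (ctr j a b)}

lemma pow8_lt (j : ℕ) : (8:ℝ)^j < 100 * 3^(j^2) := by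
  have h2j : 2*j ≤ j^2 + 1 := by
    cases j with
    | zero => omega
    | succ n => ring_nf; omega
  have key : (8:ℝ)^j ≤ 3 * 3^(j^2) := by
    calc (8:ℝ)^j ≤ 9^j := by gcongr; norm_num
    _ = 3^(2*j) := by rw [pow_mul]; norm_num
    _ ≤ 3^(j^2+1) := by apply pow_le_pow_right₀ (by norm_num) h2j
    _ = 3 * 3^(j^2) := by ring
  nlinarith [pow_pos (show (0:ℝ) < 3 by norm_num) (j^2)]

lemma rad_lt_tau (j : ℕ) : rad j < tau j := by
  unfold rad tau
  have h8 : ((1:ℝ)/8)^j = 1/8^j := by rw [div_pow]; norm_num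
  rw [h8, div_lt_div_iff₀ (by positivity) (by positivity)]
  nlinarith [pow8_lt j]

lemma sphere_null (c : E2) (r : ℝ) : volume (sphere c r) = 0 := by
  rcases lt_trichotomy r 0 with h | h | h
  · rw [sphere_eq_empty_of_neg h]; simp
  · subst h; rw [sphere_zero]
    have := vol_cball2 c 0
    rw [closedBall_zero] at this
    rw [this]; simp
  · have hsub : sphere c r ⊆ closedBall c r \ ball c r := fun y hy => by
      have h1 : dist y c = r := mem_sphere.1 hy
      exact ⟨mem_closedBall.2 h1.le, by simp [mem_ball, h1]⟩
    apply measure_mono_null hsub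
    rw [measure_diff ball_subset_closedBall measurableSet_ball.nullMeasurableSet]
    · rw [vol_ball2, vol_cball2]; simp
    · rw [vol_ball2]; exact ENNReal.mul_ne_top (by simp [ENNReal.pow_ne_top]) ENNReal.ofReal_ne_top

lemma center_null (c : E2) : volume ({c} : Set E2) = 0 := by
  have := vol_cball2 c 0
  rw [closedBall_zero] at this
  rw [this]; simp

lemma EE_conull : volume (Set.univ \ EE) = 0 := by
  classical
  set S3 : Set E2 := {x : E2 | ∀ J : ℕ, ∃ j, J ≤ j ∧ ∃ a b : ℤ, dist x (ctr j a b) < tau j} with hS3def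
  have hsub : Set.univ \ EE ⊆
      (⋃ i : ℕ×ℤ×ℤ, sphere (cI i) (rI i)) ∪ ((⋃ i : ℕ×ℤ×ℤ, {cI i}) ∪ S3) := by
    intro x hx
    simp only [mem_diff, mem_univ, true_and] at hx
    by_cases hA : ∀ i : ℕ × ℤ × ℤ, dist x (cI i) ≠ rI i ∧ x ≠ cI i
    · right
      by_cases hB : x ∈ S3
      · right; exact hB
      · exfalso
        apply hx
        refine ⟨hA, ?_⟩
        simp only [hS3def, mem_setOf_eq, not_forall] at hB
        obtain ⟨J, hJ⟩ := hB
        push_neg at hJ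
        exact ⟨J, fun j hj a b => hJ j hj a b⟩
    · push_neg at hA
      obtain ⟨i, hi⟩ := hA
      by_cases hd : dist x (cI i) = rI i
      · left; exact mem_iUnion.2 ⟨i, by simpa [mem_sphere, dist_eq_norm] using hd⟩
      · right; left
        have hx1 : x = cI i := by tauto
        exact mem_iUnion.2 ⟨i, by simp [hx1]⟩
  apply measure_mono_null hsub
  apply measure_union_null
  · exact measure_iUnion_null (fun i => sphere_null _ _)
  apply measure_union_null
  · exact measure_iUnion_null (fun i => center_null _)
  · have hcover : S3 ⊆ ⋃ R : ℕ, (S3 ∩ ball (0:E2) (R+1)) := by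
      intro x hx
      refine mem_iUnion.2 ⟨⌈dist x (0:E2)⌉₊, hx, ?_⟩
      rw [mem_ball]
      push_cast
      calc dist x 0 ≤ (⌈dist x (0:E2)⌉₊ : ℝ) := Nat.le_ceil _
      _ < (⌈dist x (0:E2)⌉₊ : ℝ) + 1 := by linarith
    apply measure_mono_null hcover
    apply measure_iUnion_null
    intro R
    set sR : ℕ → Set E2 := fun j => ⋃ p ∈ boxF j (0:E2) ((R:ℝ)+2), ball (ctr j p.1 p.2) (tau j) with hsR
    have hbound : ∀ j, volume (sR j) ≤ ENNReal.ofReal (((2*(R:ℝ)+5)^2*Real.pi) * (1/16)^j) := by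
      intro j
      have h1 := vol_grid_balls j (0:E2) (s := (R:ℝ)+2) (r := tau j) (by positivity) (tau_pos j).le
      apply le_trans h1
      apply ENNReal.ofReal_le_ofReal
      have p2 : (0:ℝ) < 2^j := by positivity
      have hone : (1:ℝ) ≤ 2^j := by
        calc (1:ℝ) = 1^j := (one_pow j).symm
        _ ≤ 2^j := by gcongr; norm_num
      have e1 : (2*((R:ℝ)+2)*2^j+1) ≤ (2*(R:ℝ)+5)*2^j := by nlinarith
      have hp : ((2:ℝ)^j)^2 * ((1/8:ℝ)^j)^2 = (1/16:ℝ)^j := by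
        rw [← mul_pow, ← mul_pow, ← pow_mul, mul_comm j 2, pow_mul]
        norm_num
      have e0 : (0:ℝ) ≤ 2*((R:ℝ)+2)*2^j+1 := by positivity
      calc (2*((R:ℝ)+2)*2^j+1)^2 * ((tau j)^2 * Real.pi)
          ≤ ((2*(R:ℝ)+5)*2^j)^2 * ((tau j)^2 * Real.pi) := by
            apply mul_le_mul_of_nonneg_right _ (by positivity)
            exact pow_le_pow_left₀ e0 e1 2
      _ = (2*(R:ℝ)+5)^2 * (((2:ℝ)^j)^2 * ((1/8:ℝ)^j)^2) * Real.pi := by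
            unfold tau; ring
      _ = ((2*(R:ℝ)+5)^2*Real.pi) * (1/16)^j := by rw [hp]; ring
    have hsum : ∑' j, volume (sR j) ≠ ⊤ := by
      apply ne_top_of_le_ne_top _ (ENNReal.tsum_le_tsum hbound)
      have hrw : ∀ j:ℕ, ENNReal.ofReal (((2*(R:ℝ)+5)^2*Real.pi) * (1/16)^j)
          = ENNReal.ofReal ((2*(R:ℝ)+5)^2*Real.pi) * (ENNReal.ofReal (1/16))^j := by
        intro j
        rw [ENNReal.ofReal_mul (by positivity), ENNReal.ofReal_pow (by norm_num)]
      rw [tsum_congr hrw, ENNReal.tsum_mul_left]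
      apply ENNReal.mul_ne_top ENNReal.ofReal_ne_top
      rw [ENNReal.tsum_geometric]
      rw [Ne, ENNReal.inv_eq_top]
      rw [tsub_eq_zero_iff_le]
      intro hcon
      have : ENNReal.ofReal (1/16) < 1 := ENNReal.ofReal_lt_one.2 (by norm_num)
      exact absurd (lt_of_lt_of_le this hcon) (lt_irrefl _)
    have hls := measure_limsup_atTop_eq_zero hsum
    apply measure_mono_null _ hls
    rintro x ⟨hx, hxR⟩
    rw [mem_limsup_iff_frequently_mem, frequently_atTop]
    intro J
    obtain ⟨j, hj, a, b, hd⟩ := hx J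
    refine ⟨j, hj, ?_⟩
    have htau1 : tau j ≤ 1 := by
      unfold tau
      apply pow_le_one₀ (by norm_num) (by norm_num)
    have hbx : (a, b) ∈ boxF j (0:E2) ((R:ℝ)+2) := by
      apply mem_boxF
      calc dist (0:E2) (ctr j a b) ≤ dist (0:E2) x + dist x (ctr j a b) := dist_triangle _ _ _
      _ ≤ ((R:ℝ)+1) + tau j := by
          rw [dist_comm (0:E2) x]
          exact add_le_add (le_of_lt (mem_ball.1 hxR)) hd.le
      _ ≤ (R:ℝ)+2 := by linarith
    exact mem_biUnion hbx (mem_ball.2 hd)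





/-! ### geometry of directions -/

lemma norm_sq_coords (x : E2) : ‖x‖^2 = (x 0)^2 + (x 1)^2 := by
  rw [EuclideanSpace.norm_eq]
  simp only [Real.norm_eq_abs, Fin.sum_univ_two, sq_abs]
  rw [Real.sq_sqrt (by positivity)]

lemma sub_coord (x y : E2) (i : Fin 2) : (x - y) i = x i - y i := rfl

lemma hit_dir {x c u : E2} {r h : ℝ} (hu : ‖u‖ = 1) (hr : 0 < r)
    (hd4 : 4*r ≤ dist x c) (hh : 0 < h) (hit : dist (x + h • u) c < r) :
    ‖u - (dist x c)⁻¹ • (c - x)‖ ≤ 4*r/dist x c := by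
  set d := dist x c with hdd
  have hd0 : 0 < d := lt_of_lt_of_le (by linarith) hd4
  have h1 : ‖h • u - (c - x)‖ < r := by
    have he : x + h • u - c = h • u - (c - x) := by abel
    rw [dist_eq_norm, he] at hit
    exact hit
  have hnu : ‖h • u‖ = h := by rw [norm_smul, hu]; simp [abs_of_pos hh]
  have hcx : ‖c - x‖ = d := by rw [← dist_eq_norm, dist_comm]
  have hhd : |h - d| < r := by
    have h2 := abs_norm_sub_norm_le (h • u) (c - x)
    rw [hnu, hcx] at h2
    linarith [lt_of_le_of_lt h2 h1]
  have hfar : d - r ≤ h := by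
    have := abs_lt.1 hhd
    linarith [this.1]
  have hhalf : d/2 ≤ h := by linarith
  have hkey : ‖u - d⁻¹ • (c-x)‖ ≤ 2*r/h := by
    have e : u - d⁻¹ • (c-x) = h⁻¹ • (h • u - (c-x)) + (h⁻¹ - d⁻¹) • (c - x) := by
      have h2 : h⁻¹ • (h • u) = u := by rw [smul_smul, inv_mul_cancel₀ (ne_of_gt hh), one_smul]
      rw [smul_sub h⁻¹, h2, sub_smul]
      abel
    rw [e]
    calc ‖h⁻¹ • (h • u - (c-x)) + (h⁻¹ - d⁻¹) • (c - x)‖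
        ≤ ‖h⁻¹ • (h • u - (c-x))‖ + ‖(h⁻¹ - d⁻¹) • (c - x)‖ := norm_add_le _ _
    _ = h⁻¹ * ‖h • u - (c-x)‖ + |h⁻¹ - d⁻¹| * d := by
        rw [norm_smul, norm_smul, hcx]
        simp only [Real.norm_eq_abs]
        rw [abs_of_pos (inv_pos.2 hh)]
    _ ≤ h⁻¹ * r + |h⁻¹ - d⁻¹| * d := by
        have := mul_le_mul_of_nonneg_left h1.le (le_of_lt (inv_pos.2 hh))
        linarith
    _ = h⁻¹ * r + (|d - h|/(h*d)) * d := by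
        have heq : h⁻¹ - d⁻¹ = (d - h)/(h*d) := by field_simp
        rw [heq, abs_div, abs_of_pos (by positivity : (0:ℝ) < h*d)]
    _ = h⁻¹ * r + |d - h|/h := by
        field_simp
    _ ≤ h⁻¹ * r + r/h := by
        have : |d - h| ≤ r := by rw [abs_sub_comm] at hhd; exact hhd.le
        have hrh : |d - h|/h ≤ r/h := by gcongr
        linarith
    _ = 2*r/h := by
        field_simp
        ring
  calc ‖u - d⁻¹ • (c-x)‖ ≤ 2*r/h := hkey
  _ ≤ 4*r/d := by
      rw [div_le_div_iff₀ hh hd0]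
      nlinarith

lemma sqrt_one_sub_sq_le {t s : ℝ} (ht : |t| ≤ 1/2) (hs : |s| ≤ 1/2) :
    Real.sqrt (1 - t^2) ≤ Real.sqrt (1 - s^2) + |t - s| := by
  have hs2 : s^2 ≤ 1/4 := by nlinarith [sq_abs s, abs_nonneg s]
  have ht2 : t^2 ≤ 1/4 := by nlinarith [sq_abs t, abs_nonneg t]
  have hsq : Real.sqrt (1 - s^2) ≥ 1/2 := by
    rw [ge_iff_le, show (1:ℝ)/2 = Real.sqrt (1/4) by
      rw [show (1:ℝ)/4 = (1/2)^2 by norm_num, Real.sqrt_sq (by norm_num)]]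
    exact Real.sqrt_le_sqrt (by linarith)
  have key : 1 - t^2 ≤ (Real.sqrt (1 - s^2) + |t - s|)^2 := by
    have e1 : (Real.sqrt (1 - s^2))^2 = 1 - s^2 := Real.sq_sqrt (by linarith)
    have e2 : |s + t| ≤ 1 := by
      calc |s + t| ≤ |s| + |t| := abs_add_le _ _
      _ ≤ 1 := by linarith
    have e3 : s^2 - t^2 ≤ |t - s| := by
      calc s^2 - t^2 = (s+t)*(s-t) := by ring
      _ ≤ |(s+t)*(s-t)| := le_abs_self _
      _ = |s+t| * |s-t| := abs_mul _ _
      _ ≤ 1 * |s-t| := by gcongr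
      _ = |t - s| := by rw [one_mul, abs_sub_comm]
    nlinarith [abs_nonneg (t - s), Real.sqrt_nonneg (1 - s^2)]
  calc Real.sqrt (1 - t^2) ≤ Real.sqrt ((Real.sqrt (1 - s^2) + |t - s|)^2) := Real.sqrt_le_sqrt key
  _ = Real.sqrt (1 - s^2) + |t - s| := Real.sqrt_sq (by positivity)

lemma sqrt_one_sub_sq_lip {t s : ℝ} (ht : |t| ≤ 1/2) (hs : |s| ≤ 1/2) :
    |Real.sqrt (1 - t^2) - Real.sqrt (1 - s^2)| ≤ |t - s| := by
  rw [abs_sub_le_iff]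
  constructor
  · linarith [sqrt_one_sub_sq_le ht hs]
  · rw [abs_sub_comm]
    linarith [sqrt_one_sub_sq_le hs ht]

lemma arc_H1 {v : E2} (hv : ‖v‖ = 1) {w : ℝ} (hw0 : 0 ≤ w) (hw : w ≤ 1/2) :
    μH[1] {u : E2 | ‖u‖ = 1 ∧ ‖u - v‖ ≤ w} ≤ ENNReal.ofReal (4*w) := by
  have hv2 : (v 0)^2 + (v 1)^2 = 1 := by
    have := norm_sq_coords v
    rw [hv] at this
    linarith [this.symm]
  set g : ℝ → E2 := fun t => pt (Real.sqrt (1-t^2) * v 0 - t * v 1)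
      (Real.sqrt (1-t^2) * v 1 + t * v 0) with hg
  have hsubset : {u : E2 | ‖u‖ = 1 ∧ ‖u - v‖ ≤ w} ⊆ g '' (Set.Icc (-w) w) := by
    rintro u ⟨hu1, huv⟩
    have hu2 : (u 0)^2 + (u 1)^2 = 1 := by
      have := norm_sq_coords u
      rw [hu1] at this
      linarith [this.symm]
    set α := u 0 * v 0 + u 1 * v 1 with hα
    set β := u 1 * v 0 - u 0 * v 1 with hβ
    have hαβ : α^2 + β^2 = 1 := by
      rw [hα, hβ]
      have : (u 0 * v 0 + u 1 * v 1)^2 + (u 1 * v 0 - u 0 * v 1)^2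
          = ((u 0)^2 + (u 1)^2) * ((v 0)^2 + (v 1)^2) := by ring
      rw [this, hu2, hv2, one_mul]
    have hd2 : ‖u - v‖^2 = 2 - 2*α := by
      rw [norm_sq_coords, sub_coord, sub_coord, hα]
      nlinarith [hu2, hv2]
    have hww : ‖u - v‖^2 ≤ w^2 := by nlinarith [norm_nonneg (u - v)]
    have hα78 : 7/8 ≤ α := by nlinarith
    have hβw : |β| ≤ w := by
      have hb2 : β^2 ≤ w^2 := by nlinarith
      have h1 : Real.sqrt (β^2) ≤ Real.sqrt (w^2) := Real.sqrt_le_sqrt hb2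
      rwa [Real.sqrt_sq_eq_abs, Real.sqrt_sq hw0] at h1
    have hsqβ : Real.sqrt (1 - β^2) = α := by
      rw [show 1 - β^2 = α^2 by linarith]
      exact Real.sqrt_sq (by linarith)
    refine ⟨β, ?_, ?_⟩
    · rw [Set.mem_Icc]
      constructor
      · linarith [(abs_le.1 hβw).1]
      · exact (abs_le.1 hβw).2
    · have hcoord0 : Real.sqrt (1-β^2) * v 0 - β * v 1 = u 0 := by
        rw [hsqβ, hα, hβ]
        linear_combination (u 0) * hv2
      have hcoord1 : Real.sqrt (1-β^2) * v 1 + β * v 0 = u 1 := by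
        rw [hsqβ, hα, hβ]
        linear_combination (u 1) * hv2
      show pt _ _ = u
      ext i
      fin_cases i
      · simpa using hcoord0
      · simpa using hcoord1
  have hlip : LipschitzOnWith 2 g (Set.Icc (-w) w) := by
    rw [lipschitzOnWith_iff_dist_le_mul]
    intro t ht s hs
    rw [Set.mem_Icc] at ht hs
    have ht' : |t| ≤ 1/2 := by rw [abs_le]; constructor <;> linarith [ht.1, ht.2]
    have hs' : |s| ≤ 1/2 := by rw [abs_le]; constructor <;> linarith [hs.1, hs.2]
    have hlipf := sqrt_one_sub_sq_lip ht' hs'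
    rw [hg]
    simp only
    rw [dist_pt_eq, Real.dist_eq]
    set ft := Real.sqrt (1 - t^2)
    set fs := Real.sqrt (1 - s^2)
    have he : (ft * v 0 - t * v 1 - (fs * v 0 - s * v 1))^2
        + (ft * v 1 + t * v 0 - (fs * v 1 + s * v 0))^2
        = ((ft - fs)^2 + (t - s)^2) * ((v 0)^2 + (v 1)^2) := by ring
    rw [he, hv2, mul_one]
    have h1 : (ft - fs)^2 ≤ (t - s)^2 := by
      rw [← sq_abs (ft - fs), ← sq_abs (t - s)]
      exact pow_le_pow_left₀ (abs_nonneg _) hlipf 2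
    have hb : (ft - fs)^2 + (t - s)^2 ≤ (2 * |t - s|)^2 := by
      rw [mul_pow, sq_abs]
      linarith [sq_nonneg (t - s)]
    calc Real.sqrt ((ft - fs)^2 + (t - s)^2) ≤ Real.sqrt ((2 * |t - s|)^2) :=
          Real.sqrt_le_sqrt hb
    _ = 2 * |t - s| := Real.sqrt_sq (by positivity)
    _ = (2:ℝ≥0) * |t - s| := by norm_num
  calc μH[1] {u : E2 | ‖u‖ = 1 ∧ ‖u - v‖ ≤ w} ≤ μH[1] (g '' (Set.Icc (-w) w)) :=
        measure_mono hsubset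
  _ ≤ (2:ℝ≥0) ^ (1:ℝ) * μH[1] (Set.Icc (-w) w) := hlip.hausdorffMeasure_image_le (by norm_num)
  _ = 2 * ENNReal.ofReal (w - (-w)) := by
      rw [MeasureTheory.hausdorffMeasure_real, Real.volume_Icc]
      norm_num
  _ = ENNReal.ofReal (4*w) := by
      rw [show (2:ℝ≥0∞) = ENNReal.ofReal 2 by norm_num, ← ENNReal.ofReal_mul (by norm_num)]
      congr 1
      ring

/-! ### eventually-constant gives directional differentiability -/

lemma diff_of_ev_const {x u : E2} {ε : ℝ} (hε : 0 < ε)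
    (hc : ∀ h : ℝ, h ∈ Set.Ioc 0 ε → ff (x + h • u) = ff x) :
    DiffAtInDir ff x u := by
  refine ⟨0, ?_⟩
  have hev : ∀ᶠ h in nhdsWithin (0:ℝ) (Set.Ioi 0),
      (fun _ => (0:ℝ)) h = (ff (x + h • u) - ff x)/h := by
    filter_upwards [Ioc_mem_nhdsGT hε] with h hh
    rw [hc h hh]
    simp
  exact tendsto_const_nhds.congr' hev


/-! ### main differentiability theorem -/

lemma pow8_le3 (j : ℕ) : (8:ℝ)^j ≤ 3 * 3^(j^2) := by
  have h2j : 2*j ≤ j^2 + 1 := by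
    cases j with
    | zero => omega
    | succ n => ring_nf; omega
  calc (8:ℝ)^j ≤ 9^j := by gcongr; norm_num
  _ = 3^(2*j) := by rw [pow_mul]; norm_num
  _ ≤ 3^(j^2+1) := by apply pow_le_pow_right₀ (by norm_num) h2j
  _ = 3 * 3^(j^2) := by ring

lemma rad4_le_tau (j : ℕ) : 4 * rad j ≤ tau j := by
  unfold rad tau
  have h8 : ((1:ℝ)/8)^j = 1/8^j := by rw [div_pow]; norm_num
  rw [h8, mul_one_div, div_le_div_iff₀ (by positivity) (by positivity)]
  nlinarith [pow8_le3 j, pow_pos (show (0:ℝ) < 3 by norm_num) (j^2)]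

lemma w_half (j : ℕ) : 4 * rad j * 8^j ≤ 1/2 := by
  unfold rad
  rw [mul_one_div, div_mul_eq_mul_div, div_le_div_iff₀ (by positivity) (by norm_num)]
  nlinarith [pow8_le3 j, pow_pos (show (0:ℝ) < 3 by norm_num) (j^2)]

lemma w_pos (j : ℕ) : (0:ℝ) < 4 * rad j * 8^j :=
  mul_pos (mul_pos (by norm_num) (rad_pos j)) (pow_pos (by norm_num) j)

lemma ZZ_iff_of_Kset_eq {y z : E2} (h : Kset y = Kset z) : (y ∈ ZZ ↔ z ∈ ZZ) := by
  unfold ZZ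
  rw [mem_setOf_eq, mem_setOf_eq, h]

lemma ff_eq_of_iff {y z : E2} (h : y ∈ ZZ ↔ z ∈ ZZ) : ff y = ff z := by
  by_cases hy : y ∈ ZZ
  · rw [ff, Set.indicator_of_mem hy, Set.indicator_of_mem (h.1 hy)]
  · rw [ff, Set.indicator_of_notMem hy, Set.indicator_of_notMem (fun hz => hy (h.2 hz))]

def Arc (x : E2) (i : ℕ×ℤ×ℤ) : Set E2 :=
  {u : E2 | ‖u‖ = 1 ∧ ‖u - (dist x (cI i))⁻¹ • (cI i - x)‖ ≤ 4 * rad i.1 * 8^i.1}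

lemma arc_bound {x : E2} {i : ℕ×ℤ×ℤ} (hne : x ≠ cI i) :
    μH[1] (Arc x i) ≤ ENNReal.ofReal (16 * rad i.1 * 8^i.1) := by
  have hd : 0 < dist x (cI i) := dist_pos.2 hne
  have hv : ‖(dist x (cI i))⁻¹ • (cI i - x)‖ = 1 := by
    rw [norm_smul, Real.norm_eq_abs, abs_of_pos (inv_pos.2 hd), ← dist_eq_norm']
    field_simp
  have h1 := arc_H1 hv (w := 4 * rad i.1 * 8^i.1) (w_pos i.1).le (w_half i.1)
  calc μH[1] (Arc x i) ≤ ENNReal.ofReal (4 * (4 * rad i.1 * 8^i.1)) := h1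
  _ = ENNReal.ofReal (16 * rad i.1 * 8^i.1) := by
      congr 1
      ring

lemma geom_tsum_ne_top {C q : ℝ} (hq0 : 0 ≤ q) (hq : q < 1) :
    ∑' n : ℕ, ENNReal.ofReal (C * q^n) ≠ ⊤ := by
  have hrw : ∀ n : ℕ, ENNReal.ofReal (C * q^n) ≤ ENNReal.ofReal |C| * (ENNReal.ofReal q)^n := by
    intro n
    rw [← ENNReal.ofReal_pow hq0, ← ENNReal.ofReal_mul (abs_nonneg C)]
    apply ENNReal.ofReal_le_ofReal
    apply mul_le_mul_of_nonneg_right (le_abs_self C) (by positivity)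
  apply ne_top_of_le_ne_top _ (ENNReal.tsum_le_tsum hrw)
  rw [ENNReal.tsum_mul_left]
  apply ENNReal.mul_ne_top ENNReal.ofReal_ne_top
  rw [ENNReal.tsum_geometric, Ne, ENNReal.inv_eq_top, tsub_eq_zero_iff_le]
  intro hcon
  have : ENNReal.ofReal q < 1 := ENNReal.ofReal_lt_one.2 hq
  exact absurd (lt_of_lt_of_le this hcon) (lt_irrefl _)

def phi (j : ℕ) : ℝ≥0∞ := ENNReal.ofReal (144 * 32^j * rad j)

lemma phi_tsum_ne_top : ∑' j, phi j ≠ ⊤ := by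
  have hb : ∀ j : ℕ, phi j ≤ ENNReal.ofReal (117 * (32/81:ℝ)^j) := by
    intro j
    apply ENNReal.ofReal_le_ofReal
    have h1 : (81:ℝ)^j ≤ 81 * 3^(j^2) := by
      have h2 : 4*j ≤ j^2 + 4 := by
        cases j with
        | zero => omega
        | succ n =>
          rcases Nat.lt_or_ge n 3 with h | h
          · interval_cases n <;> omega
          · ring_nf; nlinarith
      calc (81:ℝ)^j = 3^(4*j) := by rw [pow_mul]; norm_num
      _ ≤ 3^(j^2+4) := by apply pow_le_pow_right₀ (by norm_num) h2
      _ = 81 * 3^(j^2) := by ring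
    unfold rad
    have h3 : (0:ℝ) < 3^(j^2) := by positivity
    have h4 : (0:ℝ) < (81:ℝ)^j := by positivity
    have h6 : (0:ℝ) < (32:ℝ)^j := by positivity
    have h5 : ((32:ℝ)/81)^j = 32^j / 81^j := by rw [div_pow]
    rw [h5, mul_one_div, mul_div_assoc', div_le_div_iff₀ (by positivity) (by positivity)]
    have h7 : (32:ℝ)^j * 81^j ≤ 32^j * (81 * 3^(j^2)) :=
      mul_le_mul_of_nonneg_left h1 h6.le
    nlinarith [mul_pos h6 h3]
  apply ne_top_of_le_ne_top (geom_tsum_ne_top (by norm_num) (by norm_num)) (ENNReal.tsum_le_tsum hb)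

theorem diff_at_E {x : E2} (hx : x ∈ EE) : DiffAEDirs ff x := by
  obtain ⟨hgen, J0, hBC⟩ := hx
  unfold DiffAEDirs
  have key : ∀ m : ℕ, J0 ≤ m →
      μH[1] {u : E2 | u ∈ sphere (0:E2) 1 ∧ ¬ DiffAtInDir ff x u}
        ≤ ∑' n : ℕ, phi (n + (m+1)) := by
    intro m hm
    -- the finite low-level family
    classical
    set F : Finset (ℕ×ℤ×ℤ) :=
      (Finset.range (m+1)).biUnion (fun j => (boxF j x 1).image (fun p => (j, p))) with hF
    set δ₀ : ℝ := if hFn : F.Nonempty then F.inf' hFn (fun i => |dist x (cI i) - rI i|) else 1 with hδ₀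
    have hδpos : 0 < δ₀ := by
      rw [hδ₀]
      split
      · next hFn =>
          rw [Finset.lt_inf'_iff]
          intro i _
          have := (hgen i).1
          rw [abs_pos]
          exact sub_ne_zero.2 this
      · norm_num
    have hδle : ∀ i ∈ F, δ₀ ≤ |dist x (cI i) - rI i| := by
      intro i hi
      rw [hδ₀]
      rw [dif_pos ⟨i, hi⟩]
      exact Finset.inf'_le _ hi
    set ε : ℝ := min (min (δ₀/2) (tau m / 4)) (1/4) with hε
    have hεpos : 0 < ε := by
      rw [hε]
      exact lt_min (lt_min (by linarith) (by have := tau_pos m; linarith)) (by norm_num)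
    -- stability claim
    have claimA : ∀ u : E2, ‖u‖ = 1 →
        (∀ j : ℕ, ∀ p : ℤ×ℤ, m+1 ≤ j → p ∈ boxF j x (tau m) → u ∉ Arc x (j, p)) →
        ∀ h : ℝ, h ∈ Set.Ioc 0 ε → Kset (x + h • u) = Kset x := by
      intro u hu hnoarc h hh
      obtain ⟨hh0, hhε⟩ := hh
      have hεδ : ε ≤ δ₀/2 := le_trans (min_le_left _ _) (min_le_left _ _)
      have hετ : ε ≤ tau m / 4 := le_trans (min_le_left _ _) (min_le_right _ _)
      have hε4 : ε ≤ 1/4 := min_le_right _ _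
      have hnu : dist (x + h • u) x = h := by
        rw [dist_eq_norm]
        simp only [add_sub_cancel_left]
        rw [norm_smul, hu, Real.norm_eq_abs, abs_of_pos hh0, mul_one]
      ext i
      obtain ⟨j, a, b⟩ := i
      simp only [Kset, mem_setOf_eq, mem_ball]
      have hctr : ctr j a b = cI (j, a, b) := rfl
      have hrpos : (0:ℝ) < rI (j, a, b) := rad_pos j
      have hr100 : rI (j, a, b) ≤ 1/100 := rad_le_one j
      have hrtau : rI (j, a, b) < tau j := rad_lt_tau j
      have hmem : j ≤ m → dist x (cI (j,a,b)) ≤ 1 → (j,a,b) ∈ F := by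
        intro hjm hd1
        rw [hF]
        exact Finset.mem_biUnion.2 ⟨j, Finset.mem_range.2 (by omega),
          Finset.mem_image.2 ⟨(a,b), mem_boxF hd1, rfl⟩⟩
      constructor
      · intro hin
        by_contra hout
        push_neg at hout
        have hd : dist x (cI (j,a,b)) ≤ h + dist (x + h•u) (cI (j,a,b)) := by
          calc dist x (cI (j,a,b)) ≤ dist x (x + h•u) + dist (x+h•u) (cI (j,a,b)) :=
                dist_triangle _ _ _
          _ = h + dist (x+h•u) (cI (j,a,b)) := by rw [dist_comm x (x+h•u), hnu]
        rcases le_or_gt j m with hjm | hjm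
        · rcases le_or_gt (dist x (cI (j,a,b))) 1 with hd1 | hd1
          · have hgap := hδle _ (by
              rw [hF]
              exact Finset.mem_biUnion.2 ⟨j, Finset.mem_range.2 (by omega),
                Finset.mem_image.2 ⟨(a,b), mem_boxF hd1, rfl⟩⟩)
            rw [abs_of_nonneg (by linarith)] at hgap
            linarith
          · linarith
        · have hdist_tau : tau j ≤ dist x (cI (j,a,b)) := by
            have hB := hBC j (by omega) a b
            rwa [hctr] at hB
          have hbox : (a,b) ∈ boxF j x (tau m) := by
            apply mem_boxF
            have h1 : tau j ≤ tau (m+1) := by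
              unfold tau
              apply pow_le_pow_of_le_one (by norm_num) (by norm_num) (by omega)
            have h2 : tau (m+1) = tau m / 8 := by
              unfold tau
              rw [pow_succ]
              ring
            have h5 := tau_pos m
            rw [hctr]
            linarith
          apply hnoarc j (a, b) (by omega) hbox
          refine ⟨hu, ?_⟩
          have h4r : 4 * rI (j,a,b) ≤ dist x (cI (j,a,b)) :=
            le_trans (rad4_le_tau j) hdist_tau
          have hhit := hit_dir hu hrpos h4r hh0 hin
          refine le_trans hhit ?_
          have hdpos : (0:ℝ) < dist x (cI (j,a,b)) := lt_of_lt_of_le (tau_pos j) hdist_tau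
          rw [div_le_iff₀ hdpos]
          have htt : 4 * rad j * 8^j * tau j = 4 * rad j := by
            unfold tau
            rw [div_pow, one_pow]
            field_simp
          calc 4 * rI (j,a,b) = 4 * rad j * 8^j * tau j := by rw [htt]; rfl
          _ ≤ 4 * rad j * 8^j * dist x (cI (j,a,b)) :=
              mul_le_mul_of_nonneg_left hdist_tau (w_pos j).le
      · intro hin
        have hjlow : j < J0 := by
          by_contra hj
          push_neg at hj
          have hB := hBC j hj a b
          rw [hctr] at hB
          linarith
        have hgap := hδle _ (hmem (by omega) (by linarith))
        rw [abs_of_nonpos (by linarith)] at hgap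
        calc dist (x + h•u) (cI (j,a,b)) ≤ dist (x + h•u) x + dist x (cI (j,a,b)) :=
              dist_triangle _ _ _
        _ = h + dist x (cI (j,a,b)) := by rw [hnu]
        _ < rI (j,a,b) := by linarith
    -- bad set covered by arcs
    have hcover : {u : E2 | u ∈ sphere (0:E2) 1 ∧ ¬ DiffAtInDir ff x u}
        ⊆ ⋃ n : ℕ, ⋃ p ∈ boxF (n + (m+1)) x (tau m), Arc x (n + (m+1), p) := by
      rintro u ⟨husph, hnd⟩
      have hu : ‖u‖ = 1 := by
        rw [mem_sphere, dist_zero_right] at husph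
        exact husph
      by_contra hnot
      apply hnd
      apply diff_of_ev_const hεpos
      intro h hh
      refine ff_eq_of_iff (ZZ_iff_of_Kset_eq (claimA u hu ?_ h hh))
      intro j p hj hp harc
      apply hnot
      rw [mem_iUnion]
      refine ⟨j - (m+1), ?_⟩
      have hjj : j - (m+1) + (m+1) = j := by omega
      rw [hjj]
      exact mem_biUnion hp harc
    calc μH[1] {u : E2 | u ∈ sphere (0:E2) 1 ∧ ¬ DiffAtInDir ff x u}
        ≤ μH[1] (⋃ n : ℕ, ⋃ p ∈ boxF (n + (m+1)) x (tau m), Arc x (n + (m+1), p)) :=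
          measure_mono hcover
    _ ≤ ∑' n : ℕ, μH[1] (⋃ p ∈ boxF (n + (m+1)) x (tau m), Arc x (n + (m+1), p)) :=
          measure_iUnion_le _
    _ ≤ ∑' n : ℕ, phi (n + (m+1)) := by
        apply ENNReal.tsum_le_tsum
        intro n
        set j := n + (m+1) with hj
        calc μH[1] (⋃ p ∈ boxF j x (tau m), Arc x (j, p))
            ≤ ∑ p ∈ boxF j x (tau m), μH[1] (Arc x (j, p)) := measure_biUnion_finset_le _ _
        _ ≤ ∑ p ∈ boxF j x (tau m), ENNReal.ofReal (16 * rad j * 8^j) := by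
            apply Finset.sum_le_sum
            intro p _
            exact arc_bound ((hgen (j, p)).2)
        _ = (boxF j x (tau m)).card * ENNReal.ofReal (16 * rad j * 8^j) := by
            rw [Finset.sum_const, nsmul_eq_mul]
        _ ≤ ENNReal.ofReal (9 * 4^j) * ENNReal.ofReal (16 * rad j * 8^j) := by
            gcongr
            calc ((boxF j x (tau m)).card : ℝ≥0∞)
                = ENNReal.ofReal ((boxF j x (tau m)).card : ℝ) := by rw [ENNReal.ofReal_natCast]
            _ ≤ ENNReal.ofReal (9 * 4^j) := by
                apply ENNReal.ofReal_le_ofReal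
                have h1 := card_boxF j x (le_of_lt (tau_pos m))
                apply le_trans h1
                have htau1 : tau m ≤ 1 := by
                  unfold tau
                  apply pow_le_one₀ (by norm_num) (by norm_num)
                have h2 : (1:ℝ) ≤ 2^j := by
                  calc (1:ℝ) = 1^j := (one_pow j).symm
                  _ ≤ 2^j := by gcongr; norm_num
                have hp2 : (0:ℝ) < 2^j := by positivity
                have h3 : 2*(tau m)*2^j + 1 ≤ 3*2^j := by
                  nlinarith [mul_le_mul_of_nonneg_right htau1 hp2.le]
                have h4 : (0:ℝ) ≤ 2*(tau m)*2^j + 1 := by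
                  nlinarith [tau_pos m]
                calc (2*(tau m)*2^j + 1)^2 ≤ (3*2^j)^2 := by
                      apply pow_le_pow_left₀ h4 h3
                _ = 9 * (2^j)^2 := by ring
                _ = 9 * 4^j := by
                      congr 1
                      rw [← pow_mul, mul_comm j 2, pow_mul]
                      norm_num
        _ = phi j := by
            unfold phi
            rw [← ENNReal.ofReal_mul (by positivity)]
            congr 1
            have h32 : (4:ℝ)^j * 8^j = 32^j := by rw [← mul_pow]; norm_num
            calc 9 * 4^j * (16 * rad j * 8^j) = 144 * (4^j * 8^j) * rad j := by ring
            _ = 144 * 32^j * rad j := by rw [h32]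
  -- conclude: bound tends to 0
  have htend := ENNReal.tendsto_sum_nat_add phi phi_tsum_ne_top
  have hbound : ∀ᶠ i in atTop, μH[1] {u : E2 | u ∈ sphere (0:E2) 1 ∧ ¬ DiffAtInDir ff x u}
      ≤ ∑' n : ℕ, phi (n + i) := by
    filter_upwards [eventually_ge_atTop (J0+1)] with i hi
    have := key (i-1) (by omega)
    have heq : i - 1 + 1 = i := by omega
    rw [heq] at this
    exact this
  have hle := ge_of_tendsto htend hbound
  exact le_antisymm hle zero_le


/-! ### witnesses: geometric helpers -/

lemma exists_far_point (c e : E2) {t : ℝ} (ht : 0 ≤ t) :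
    ∃ z : E2, dist z c = t ∧ dist z e = dist c e + t := by
  by_cases hce : c = e
  · have h1 : ‖pt 1 0‖^2 = 1 := by rw [norm_sq_coords]; norm_num
    have h2 : ‖pt 1 0‖ = 1 := by nlinarith [norm_nonneg (pt 1 0)]
    have hzc : dist (c + t • pt 1 0) c = t := by
      rw [dist_eq_norm, add_sub_cancel_left, norm_smul, Real.norm_eq_abs,
        abs_of_nonneg ht, h2, mul_one]
    refine ⟨c + t • pt 1 0, hzc, ?_⟩
    rw [← hce, hzc, dist_self]
    ring
  · set d := dist c e with hd
    have hd0 : 0 < d := dist_pos.2 hce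
    refine ⟨c + (t/d) • (c - e), ?_, ?_⟩
    · rw [dist_eq_norm, add_sub_cancel_left, norm_smul, Real.norm_eq_abs,
        abs_of_nonneg (by positivity), ← dist_eq_norm]
      rw [← hd]
      field_simp
    · have he : c + (t/d) • (c - e) - e = (1 + t/d) • (c - e) := by
        rw [add_smul, one_smul]
        abel
      rw [dist_eq_norm, he, norm_smul, Real.norm_eq_abs, abs_of_nonneg (by positivity),
        ← dist_eq_norm, ← hd]
      field_simp
      try ring

lemma ball_subset_ball_dist {c e : E2} {r s : ℝ} (hr : 0 < r) (h : ball c r ⊆ ball e s) :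
    dist c e + r/2 < s := by
  obtain ⟨z, hz1, hz2⟩ := exists_far_point c e (by linarith : (0:ℝ) ≤ r/2)
  have hz3 : z ∈ ball c r := mem_ball.2 (by rw [hz1]; linarith)
  have := mem_ball.1 (h hz3)
  rw [hz2] at this
  linarith

/-- classification of balls meeting a deep ball around a grid point -/
lemma classify {k : ℕ} {a b : ℤ} {g : ℝ} {J : ℕ}
    (hgap : ∀ l : ℕ, ∀ p : ℤ × ℤ, l ≤ k + 8 → dist (ctr k a b) (cI (l, p)) ≤ 2 →
        g ≤ |dist (ctr k a b) (cI (l, p)) - rad l|)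
    (hJk : k + 2 ≤ J) (hradJ : 4 * rad J < g)
    (i : ℕ × ℤ × ℤ) (hne : cI i ≠ ctr k a b)
    (hmeet : ∃ z, z ∈ ball (cI i) (rI i) ∧ z ∈ ball (ctr k a b) (rad J)) :
    (ball (ctr k a b) (rad J) ⊆ ball (cI i) (rI i)) ∨ ((1/2:ℝ)^i.1 < 4 * rad J) := by
  obtain ⟨l, p1, p2⟩ := i
  simp only at *
  set c := ctr k a b with hc
  set e := cI (l, p1, p2) with he
  have hrIl : rI (l, p1, p2) = rad l := rfl
  have hdce : dist c e < rad l + rad J := by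
    obtain ⟨z, hz1, hz2⟩ := hmeet
    calc dist c e ≤ dist c z + dist z e := dist_triangle _ _ _
    _ = dist z c + dist z e := by rw [dist_comm c z]
    _ < rad J + rad l := by
        rw [hrIl] at hz1
        have := mem_ball.1 hz1
        have := mem_ball.1 hz2
        linarith [mem_ball.1 hz1, mem_ball.1 hz2]
    _ = rad l + rad J := by ring
  have hradJpos := rad_pos J
  have hradlpos := rad_pos l
  have hgpos : 0 < g := by linarith
  rcases le_or_gt ((1/2:ℝ)^(k+1)) (rad l) with h1 | h1
  · -- big ball: use the gap
    left
    have hl8 : l ≤ k + 8 := by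
      have h2 : (100:ℝ) * 3^(l^2) ≤ 2^(k+1) := by
        unfold rad at h1
        rw [div_pow, one_pow] at h1
        rw [div_le_div_iff₀ (by positivity) (by positivity)] at h1
        nlinarith [h1]
      have h3 : (2:ℝ)^l ≤ 3^(l^2) := by
        calc (2:ℝ)^l ≤ 3^l := by gcongr; norm_num
        _ ≤ 3^(l^2) := by
            apply pow_le_pow_right₀ (by norm_num)
            exact Nat.le_self_pow (by norm_num) l
      have h4 : (2:ℝ)^l < 2^(k+1) := by
        nlinarith [pow_pos (show (0:ℝ) < 3 by norm_num) (l^2),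
          pow_pos (show (0:ℝ) < 2 by norm_num) l]
      have h5 : l < k+1 := by
        by_contra hcon
        push_neg at hcon
        have : (2:ℝ)^(k+1) ≤ 2^l := by
          apply pow_le_pow_right₀ (by norm_num) hcon
        linarith
      omega
    have hd2 : dist c e ≤ 2 := by
      have := rad_le_one l
      have := rad_le_one J
      linarith
    have hgap2 := hgap l (p1, p2) hl8 hd2
    rcases lt_trichotomy (dist c e) (rad l) with hlt | heq | hgt
    · rw [abs_of_nonpos (by linarith)] at hgap2
      -- rad l − dist ≥ g: containment
      intro z hz
      rw [mem_ball] at hz ⊢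
      rw [hrIl]
      calc dist z e ≤ dist z c + dist c e := dist_triangle _ _ _
      _ < rad J + dist c e := by linarith
      _ ≤ rad l := by linarith
    · exfalso
      rw [heq] at hgap2
      simp at hgap2
      linarith
    · exfalso
      rw [abs_of_nonneg (by linarith)] at hgap2
      linarith
  · -- small ball
    rcases le_or_gt l k with hlk | hlk
    · -- impossible: grid separation
      exfalso
      have hsep : (1/2:ℝ)^k ≤ dist c e := by
        have := grid_sep (k := k) (l := l) (a := a) (b := b) (a' := p1) (b' := p2)
            (fun hcon => hne hcon.symm)
        rwa [max_eq_left hlk] at this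
      have hJ2 : rad J ≤ (1/2:ℝ)^(k+2) / 100 := le_trans (rad_anti hJk) (rad_le_pow (k+2))
      have hpk : (0:ℝ) < (1/2:ℝ)^k := by positivity
      have he1 : ((1/2:ℝ))^(k+1) = (1/2)^k/2 := by rw [pow_succ]; ring
      have he2 : ((1/2:ℝ))^(k+2) = (1/2)^k/4 := by rw [pow_succ, pow_succ]; ring
      rw [he1] at h1
      rw [he2] at hJ2
      linarith
    · -- l > k : tiny
      right
      have hsep : (1/2:ℝ)^l ≤ dist c e := by
        have := grid_sep (k := k) (l := l) (a := a) (b := b) (a' := p1) (b' := p2)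
            (fun hcon => hne hcon.symm)
        rwa [max_eq_right hlk.le] at this
      have hrl : rad l ≤ (1/2:ℝ)^l / 100 := rad_le_pow l
      have hpl : (0:ℝ) < (1/2:ℝ)^l := by positivity
      linarith


lemma vol_ball2' (x : E2) {r : ℝ} (hr : 0 ≤ r) :
    volume (ball x r) = ENNReal.ofReal (r^2 * Real.pi) := by
  rw [vol_ball2, ← ENNReal.ofReal_pow hr, ← ENNReal.ofReal_mul (by positivity)]

lemma vol_cball2' (x : E2) {r : ℝ} (hr : 0 ≤ r) :
    volume (closedBall x r) = ENNReal.ofReal (r^2 * Real.pi) := by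
  rw [vol_cball2, ← ENNReal.ofReal_pow hr, ← ENNReal.ofReal_mul (by positivity)]

lemma geom_tsum_le {C q : ℝ} (hC : 0 ≤ C) (hq0 : 0 ≤ q) (hq : q < 1) :
    ∑' n : ℕ, ENNReal.ofReal (C * q^n) ≤ ENNReal.ofReal (C * (1-q)⁻¹) := by
  have hrw : ∀ n : ℕ, ENNReal.ofReal (C * q^n)
      = ENNReal.ofReal C * (ENNReal.ofReal q)^n := by
    intro n
    rw [← ENNReal.ofReal_pow hq0, ← ENNReal.ofReal_mul hC]
  rw [tsum_congr hrw, ENNReal.tsum_mul_left, ENNReal.tsum_geometric]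
  have h1 : (1 : ℝ≥0∞) - ENNReal.ofReal q = ENNReal.ofReal (1 - q) := by
    rw [ENNReal.ofReal_sub 1 hq0, ENNReal.ofReal_one]
  rw [h1, ← ENNReal.ofReal_inv_of_pos (by linarith), ← ENNReal.ofReal_mul hC]

def SCset (c : E2) (R : ℝ) : Set (ℕ × ℤ × ℤ) := {i | ball c R ⊆ ball (cI i) (rI i)}

lemma annulus_pick {k : ℕ} {a b : ℤ} {g : ℝ} {J : ℕ} (x : E2)
    (hgap : ∀ l : ℕ, ∀ p : ℤ × ℤ, l ≤ k + 8 → dist (ctr k a b) (cI (l, p)) ≤ 2 →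
        g ≤ |dist (ctr k a b) (cI (l, p)) - rad l|)
    (hJk : k + 2 ≤ J) (hradJ : 4 * rad J < g) :
    ∃ y : E2, y ∈ EE ∧ y ≠ x ∧ dist y (ctr k a b) < rad J ∧
      Kset y = SCset (ctr k a b) (rad J) := by
  classical
  set c := ctr k a b with hc
  have hradJpos := rad_pos J
  set TU : Set E2 := ⋃ l : ℕ, ⋃ p ∈ boxF l c (2 * rad J),
      (if (1/2:ℝ)^l < 4 * rad J then ball (ctr l p.1 p.2) (rad l) else ∅) with hTU
  -- measure of the tiny-ball union
  have hlevel : ∀ l : ℕ, volume (⋃ p ∈ boxF l c (2 * rad J),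
      (if (1/2:ℝ)^l < 4 * rad J then ball (ctr l p.1 p.2) (rad l) else ∅))
      ≤ ENNReal.ofReal (((rad J)^2 * Real.pi * (64/10000)) * (4/9)^l) := by
    intro l
    by_cases hl : (1/2:ℝ)^l < 4 * rad J
    · simp only [if_pos hl]
      refine le_trans (vol_grid_balls l c (by positivity : (0:ℝ) ≤ 2 * rad J) (rad_pos l).le) ?_
      apply ENNReal.ofReal_le_ofReal
      have h2l : (0:ℝ) < 2^l := by positivity
      have h9l : (0:ℝ) < 9^l := by positivity
      have h3l2 : (0:ℝ) < (3:ℝ)^(l^2) := by positivity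
      have h1 : 1 < 4 * rad J * 2^l := by
        have he : (1/2:ℝ)^l * 2^l = 1 := by rw [← mul_pow]; norm_num
        nlinarith
      have hcard : 2*(2*rad J)*2^l + 1 ≤ 8 * rad J * 2^l := by nlinarith
      have hradl2 : (rad l)^2 ≤ (1/10000) * (1/9)^l := by
        unfold rad
        rw [div_pow, one_pow]
        have h9 : (100 * (3:ℝ)^(l^2))^2 = 10000 * 9^(l^2) := by
          rw [mul_pow, ← pow_mul, mul_comm (l^2) 2, pow_mul]
          norm_num
        rw [h9]
        have h10 : (9:ℝ)^l ≤ 9^(l^2) := by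
          apply pow_le_pow_right₀ (by norm_num)
          exact Nat.le_self_pow (by norm_num) l
        have h11 : ((1:ℝ)/9)^l = 1/9^l := by rw [div_pow]; norm_num
        rw [h11, mul_one_div, div_le_div_iff₀ (by positivity) (by positivity)]
        have h12 : (0:ℝ) < (9:ℝ)^(l^2) := by positivity
        nlinarith
      have hsq4 : ((2:ℝ)^l)^2 = 4^l := by
        rw [← pow_mul, mul_comm l 2, pow_mul]
        norm_num
      have h49 : ((4:ℝ)/9)^l = 4^l * (1/9)^l := by
        rw [← mul_pow]
        norm_num
      have h4l : (0:ℝ) < 4^l := by positivity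
      have hbb : (0:ℝ) ≤ 2*(2*rad J)*2^l + 1 := by positivity
      calc (2*(2*rad J)*2^l + 1)^2 * ((rad l)^2 * Real.pi)
          ≤ (8 * rad J * 2^l)^2 * ((rad l)^2 * Real.pi) := by
            apply mul_le_mul_of_nonneg_right (pow_le_pow_left₀ hbb hcard 2) (by positivity)
      _ = 64 * (rad J)^2 * (((2:ℝ)^l)^2 * (rad l)^2) * Real.pi := by ring
      _ = 64 * (rad J)^2 * (4^l * (rad l)^2) * Real.pi := by rw [hsq4]
      _ ≤ 64 * (rad J)^2 * (4^l * ((1/10000) * (1/9)^l)) * Real.pi := by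
            apply mul_le_mul_of_nonneg_right _ Real.pi_nonneg
            apply mul_le_mul_of_nonneg_left _ (by positivity)
            exact mul_le_mul_of_nonneg_left hradl2 h4l.le
      _ = ((rad J)^2 * Real.pi * (64/10000)) * (4^l * (1/9)^l) := by ring
      _ = ((rad J)^2 * Real.pi * (64/10000)) * (4/9)^l := by rw [h49]
    · simp only [if_neg hl]
      have : (⋃ p ∈ boxF l c (2 * rad J), (∅ : Set E2)) = ∅ := by simp
      rw [this]
      simp only [measure_empty]
      exact zero_le
  have hTUb : volume TU ≤ ENNReal.ofReal ((rad J)^2 * Real.pi * (1/80)) := by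
    calc volume TU ≤ ∑' l : ℕ, volume (⋃ p ∈ boxF l c (2 * rad J),
        (if (1/2:ℝ)^l < 4 * rad J then ball (ctr l p.1 p.2) (rad l) else ∅)) :=
          measure_iUnion_le _
    _ ≤ ∑' l : ℕ, ENNReal.ofReal (((rad J)^2 * Real.pi * (64/10000)) * (4/9)^l) :=
          ENNReal.tsum_le_tsum hlevel
    _ ≤ ENNReal.ofReal (((rad J)^2 * Real.pi * (64/10000)) * (1 - 4/9)⁻¹) :=
          geom_tsum_le (by positivity) (by norm_num) (by norm_num)
    _ ≤ ENNReal.ofReal ((rad J)^2 * Real.pi * (1/80)) := by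
          apply ENNReal.ofReal_le_ofReal
          have hpp : (0:ℝ) ≤ (rad J)^2 * Real.pi := by positivity
          nlinarith [hpp]
  -- pick a point
  have hpick : ∃ y : E2, (y ∈ ball c (rad J) \ closedBall c (rad (J+1)))
      ∧ y ∉ TU ∧ y ∈ EE ∧ y ≠ x := by
    by_contra hcon
    push_neg at hcon
    have hsub : ball c (rad J) ⊆ (TU ∪ (Set.univ \ EE)) ∪ ({x} ∪ closedBall c (rad (J+1))) := by
      intro y hy
      by_cases h1 : y ∈ closedBall c (rad (J+1))
      · exact Or.inr (Or.inr h1)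
      by_cases h2 : y ∈ TU
      · exact Or.inl (Or.inl h2)
      by_cases h3 : y ∈ EE
      · have := hcon y ⟨hy, h1⟩ h2 h3
        exact Or.inr (Or.inl (by simp [this]))
      · exact Or.inl (Or.inr ⟨trivial, h3⟩)
    have hμ : volume (ball c (rad J))
        ≤ volume ((TU ∪ (Set.univ \ EE)) ∪ ({x} ∪ closedBall c (rad (J+1)))) :=
      measure_mono hsub
    rw [vol_ball2' c hradJpos.le] at hμ
    have hμ2 : volume ((TU ∪ (Set.univ \ EE)) ∪ ({x} ∪ closedBall c (rad (J+1))))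
        ≤ ENNReal.ofReal ((rad J)^2 * Real.pi * (1/80))
          + ENNReal.ofReal ((rad (J+1))^2 * Real.pi) := by
      calc volume ((TU ∪ (Set.univ \ EE)) ∪ ({x} ∪ closedBall c (rad (J+1))))
          ≤ volume (TU ∪ (Set.univ \ EE)) + volume ({x} ∪ closedBall c (rad (J+1))) :=
            measure_union_le _ _
      _ ≤ (volume TU + volume (Set.univ \ EE))
            + (volume ({x} : Set E2) + volume (closedBall c (rad (J+1)))) := by
            gcongr <;> exact measure_union_le _ _
      _ = volume TU + volume (closedBall c (rad (J+1))) := by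
            rw [EE_conull, center_null]
            ring
      _ ≤ ENNReal.ofReal ((rad J)^2 * Real.pi * (1/80))
            + ENNReal.ofReal ((rad (J+1))^2 * Real.pi) := by
            gcongr
            rw [vol_cball2' c (rad_pos (J+1)).le]
    have hfinal := le_trans hμ hμ2
    rw [← ENNReal.ofReal_add (by positivity) (by positivity)] at hfinal
    rw [ENNReal.ofReal_le_ofReal_iff (by positivity)] at hfinal
    have hsucc : rad (J+1) ≤ rad J / 3 := rad_succ_le J
    have hsq : (rad (J+1))^2 ≤ (rad J)^2 / 9 := by
      nlinarith [rad_pos (J+1), rad_pos J]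
    nlinarith [Real.pi_pos, sq_nonneg (rad J), mul_pos (mul_pos hradJpos hradJpos) Real.pi_pos]
  obtain ⟨y, hyA, hyTU, hyE, hyx⟩ := hpick
  obtain ⟨hyball, hycb⟩ := hyA
  have hyc1 : dist y c < rad J := mem_ball.1 hyball
  have hyc2 : rad (J+1) < dist y c := by
    by_contra hcb
    push_neg at hcb
    exact hycb (mem_closedBall.2 hcb)
  refine ⟨y, hyE, hyx, hyc1, ?_⟩
  apply Set.eq_of_subset_of_subset
  · intro i hiK
    have hiK' : dist y (cI i) < rI i := mem_ball.1 hiK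
    by_cases hcent : cI i = c
    · have hlJ : i.1 ≤ J := by
        have h1 : rad (J+1) < rad i.1 := by
          rw [hcent] at hiK'
          have : rI i = rad i.1 := rfl
          linarith [hyc2, hiK']
        by_contra hcon
        push_neg at hcon
        have := rad_anti (show J+1 ≤ i.1 by omega)
        linarith
      show ball c (rad J) ⊆ ball (cI i) (rI i)
      rw [hcent]
      exact ball_subset_ball (rad_anti hlJ)
    · have hmeet : ∃ z, z ∈ ball (cI i) (rI i) ∧ z ∈ ball c (rad J) := ⟨y, hiK, hyball⟩
      rcases classify hgap hJk hradJ i hcent hmeet with hsub | htiny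
      · exact hsub
      · exfalso
        apply hyTU
        rw [hTU]
        apply mem_iUnion.2
        refine ⟨i.1, ?_⟩
        have hrle : rad i.1 ≤ (1/2:ℝ)^(i.1) / 100 := rad_le_pow i.1
        have hdci : dist c (cI i) ≤ 2 * rad J := by
          have h5 : dist c (cI i) ≤ dist c y + dist y (cI i) := dist_triangle _ _ _
          rw [dist_comm c y] at h5
          have : rI i = rad i.1 := rfl
          nlinarith [hyc1, hiK']
        have hbx : (i.2.1, i.2.2) ∈ boxF i.1 c (2 * rad J) := mem_boxF hdci
        refine mem_biUnion hbx ?_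
        rw [if_pos htiny]
        exact hiK
  · intro i hiS
    exact hiS hyball


lemma ctr_lift {k m : ℕ} (h : k ≤ m) (a b : ℤ) :
    ctr m (a * 2^(m-k)) (b * 2^(m-k)) = ctr k a b := by
  unfold ctr
  rw [← coord_rewrite h a, ← coord_rewrite h b]

lemma SC_finite {k : ℕ} {a b : ℤ} {J : ℕ} : (SCset (ctr k a b) (rad J)).Finite := by
  classical
  apply Set.Finite.subset (Finset.finite_toSet
    ((Finset.range (J+1)).biUnion (fun l => (boxF l (ctr k a b) 1).image (fun p => (l, p)))))
  rintro ⟨l, p1, p2⟩ hiS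
  have hc : (ctr k a b) ∈ ball (ctr k a b) (rad J) := mem_ball_self (rad_pos J)
  have h1 : dist (ctr k a b) (cI (l,p1,p2)) < rad l := mem_ball.1 (hiS hc)
  have h2 := ball_subset_ball_dist (rad_pos J) hiS
  have hlJ : l ≤ J := by
    have h3 : rad J / 2 < rad l := by
      have := dist_nonneg (x := ctr k a b) (y := cI (l,p1,p2))
      have hr : rI (l,p1,p2) = rad l := rfl
      rw [hr] at h2
      linarith
    by_contra hcon
    push_neg at hcon
    have h4 : rad l ≤ rad (J+1) := rad_anti (by omega)
    have h5 : rad (J+1) ≤ rad J / 3 := rad_succ_le J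
    linarith [rad_pos J]
  have hd1 : dist (ctr k a b) (cI (l,p1,p2)) ≤ 1 := by
    have := rad_le_one l
    linarith
  simp only [Finset.coe_biUnion, Finset.coe_image, Set.mem_iUnion]
  refine ⟨l, by simp [Finset.mem_range]; omega, ?_⟩
  simp only [Set.mem_image, Finset.mem_coe]
  exact ⟨(p1, p2), mem_boxF hd1, rfl⟩

lemma pow_half_lt_iff {m n : ℕ} : ((1:ℝ)/2)^m < (1/2)^n ↔ n < m := by
  constructor
  · intro h
    by_contra hcon
    push_neg at hcon
    have := pow_le_pow_of_le_one (by norm_num : (0:ℝ) ≤ 1/2) (by norm_num) hcon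
    linarith
  · intro h
    have := pow_lt_pow_right_of_lt_one₀ (by norm_num : (0:ℝ) < 1/2) (by norm_num) h
    exact this

lemma SC_succ {k : ℕ} {a b : ℤ} {g : ℝ} {J : ℕ}
    (hgap : ∀ l : ℕ, ∀ p : ℤ × ℤ, l ≤ k + 8 → dist (ctr k a b) (cI (l, p)) ≤ 2 →
        g ≤ |dist (ctr k a b) (cI (l, p)) - rad l|)
    (hJk : k + 2 ≤ J) (hradJ : 4 * rad J < g) :
    SCset (ctr k a b) (rad (J+1))
      = insert (J+1, a * 2^(J+1-k), b * 2^(J+1-k)) (SCset (ctr k a b) (rad J)) := by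
  have hknew : cI (J+1, a * 2^(J+1-k), b * 2^(J+1-k)) = ctr k a b :=
    ctr_lift (by omega) a b
  apply Set.eq_of_subset_of_subset
  · intro i hiS
    by_cases hcent : cI i = ctr k a b
    · have h2 := ball_subset_ball_dist (rad_pos (J+1)) hiS
      rw [hcent, dist_self] at h2
      have hlJ1 : i.1 ≤ J+1 := by
        by_contra hcon
        push_neg at hcon
        have h4 : rad i.1 ≤ rad (J+2) := rad_anti (by omega)
        have h5 : rad (J+2) ≤ rad (J+1) / 3 := rad_succ_le (J+1)
        have hr : rI i = rad i.1 := rfl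
        rw [hr] at h2
        linarith [rad_pos (J+1)]
      rcases lt_or_eq_of_le hlJ1 with hlt | heq
      · apply Set.mem_insert_of_mem
        show ball (ctr k a b) (rad J) ⊆ ball (cI i) (rI i)
        rw [hcent]
        exact ball_subset_ball (rad_anti (by omega))
      · obtain ⟨l, p1, p2⟩ := i
        simp only at heq
        subst heq
        apply Set.mem_insert_iff.2
        left
        have e0 : (p1:ℝ)/2^(J+1) = ((a * 2^(J+1-k) : ℤ):ℝ)/2^(J+1) := by
          have h3 : (cI (J+1, p1, p2)) 0 = (ctr k a b) 0 := by rw [hcent]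
          have h4 : (ctr k a b) 0 = (a:ℝ)/2^k := rfl
          rw [h4, coord_rewrite (show k ≤ J+1 by omega) a] at h3
          exact h3
        have e1 : (p2:ℝ)/2^(J+1) = ((b * 2^(J+1-k) : ℤ):ℝ)/2^(J+1) := by
          have h3 : (cI (J+1, p1, p2)) 1 = (ctr k a b) 1 := by rw [hcent]
          have h4 : (ctr k a b) 1 = (b:ℝ)/2^k := rfl
          rw [h4, coord_rewrite (show k ≤ J+1 by omega) b] at h3
          exact h3
        have hp2 : (0:ℝ) < (2:ℝ)^(J+1) := by positivity
        have e0' : p1 = a * 2^(J+1-k) := by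
          field_simp at e0
          exact_mod_cast e0
        have e1' : p2 = b * 2^(J+1-k) := by
          field_simp at e1
          exact_mod_cast e1
        rw [e0', e1']
    · have hmeet : ∃ z, z ∈ ball (cI i) (rI i) ∧ z ∈ ball (ctr k a b) (rad J) :=
        ⟨ctr k a b, hiS (mem_ball_self (rad_pos (J+1))), mem_ball_self (rad_pos J)⟩
      rcases classify hgap hJk hradJ i hcent hmeet with hsub | htiny
      · exact Set.mem_insert_of_mem _ hsub
      · exfalso
        have h2 := ball_subset_ball_dist (rad_pos (J+1)) hiS
        have hlk : k < i.1 := by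
          have hJ2 : rad J ≤ (1/2:ℝ)^(k+2)/100 := le_trans (rad_anti hJk) (rad_le_pow (k+2))
          have h5 : ((1:ℝ)/2)^(i.1) < (1/2)^(k+1) := by
            have h6 : ((1:ℝ)/2)^(k+2) = (1/2)^(k+1)/2 := by rw [pow_succ]; ring
            have h7 : (0:ℝ) < (1/2:ℝ)^(k+1) := by positivity
            calc ((1:ℝ)/2)^(i.1) < 4 * rad J := htiny
            _ ≤ 4 * ((1/2:ℝ)^(k+2)/100) := by linarith
            _ < (1/2)^(k+1) := by rw [h6]; linarith
          have := pow_half_lt_iff.1 h5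
          omega
        obtain ⟨l, p1, p2⟩ := i
        simp only at hlk htiny h2
        have hsep : (1/2:ℝ)^l ≤ dist (ctr k a b) (cI (l,p1,p2)) := by
          have := grid_sep (k := k) (l := l) (a := a) (b := b) (a' := p1) (b' := p2)
            (fun hcon => hcent hcon.symm)
          rwa [max_eq_right hlk.le] at this
        have hrl : rad l ≤ (1/2:ℝ)^l / 100 := rad_le_pow l
        have hr : rI (l,p1,p2) = rad l := rfl
        rw [hr] at h2
        have hpl : (0:ℝ) < (1/2:ℝ)^l := by positivity
        linarith [rad_pos (J+1)]
  · intro i hiI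
    rcases Set.mem_insert_iff.1 hiI with heq | hiS
    · subst heq
      show ball (ctr k a b) (rad (J+1)) ⊆ ball (cI _) (rI _)
      rw [hknew]
      exact fun z hz => hz
    · exact subset_trans (ball_subset_ball (rad_anti (by omega))) hiS

lemma witness (x : E2) {δ : ℝ} (hδ : 0 < δ) :
    ∃ y : E2, y ∈ EE ∧ y ≠ x ∧ dist y x < δ ∧ (y ∈ ZZ ↔ x ∉ ZZ) := by
  classical
  obtain ⟨k, hk⟩ := exists_pow_lt_of_lt_one (show (0:ℝ) < δ/8 by linarith)
    (show (1/2:ℝ) < 1 by norm_num)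
  set a := ⌊x 0 * 2^k⌋ with ha
  set b := ⌊x 1 * 2^k⌋ with hb
  set c := ctr k a b with hc
  have hp2 : (0:ℝ) < (2:ℝ)^k := by positivity
  have hhalf : ((1:ℝ)/2)^k = 1/2^k := by rw [div_pow]; norm_num
  have hcoord : ∀ t : ℝ, |t - (⌊t * 2^k⌋:ℝ)/2^k| ≤ (1/2)^k := by
    intro t
    have h1 := Int.floor_le (t * 2^k)
    have h2 := Int.lt_floor_add_one (t * 2^k)
    have h3 : t - (⌊t * 2^k⌋:ℝ)/2^k = (t * 2^k - ⌊t * 2^k⌋)/2^k := by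
      field_simp
    rw [h3, hhalf, abs_div, abs_of_pos hp2]
    gcongr
    rw [abs_le]
    constructor <;> linarith
  have hxc : dist x c ≤ 2 * (1/2)^k := by
    have h0 := hcoord (x 0)
    have h1 := hcoord (x 1)
    have hc0 : c 0 = (a:ℝ)/2^k := rfl
    have hc1 : c 1 = (b:ℝ)/2^k := rfl
    calc dist x c ≤ |x 0 - c 0| + |x 1 - c 1| := dist_le_coords x c
    _ ≤ (1/2)^k + (1/2)^k := by
        rw [hc0, hc1, ha, hb]
        exact add_le_add h0 h1
    _ = 2 * (1/2)^k := by ring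
  -- the gap over the finite relevant family
  set G : Finset (ℕ×ℤ×ℤ) := (Finset.range (k+9)).biUnion
      (fun l => (boxF l c 2).image (fun p => (l, p))) with hG
  have hGne : G.Nonempty := by
    refine ⟨(k, a, b), ?_⟩
    rw [hG]
    refine Finset.mem_biUnion.2 ⟨k, Finset.mem_range.2 (by omega),
      Finset.mem_image.2 ⟨(a,b), mem_boxF ?_, rfl⟩⟩
    rw [← hc, dist_self]
    norm_num
  set g : ℝ := min 1 (G.inf' hGne (fun i => |dist c (cI i) - rad i.1|)) with hg
  have hgpos : 0 < g := by
    rw [hg]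
    apply lt_min one_pos
    rw [Finset.lt_inf'_iff]
    rintro ⟨l,p1,p2⟩ hi
    rw [abs_pos]
    exact sub_ne_zero.2 (grid_off_sphere k l a b p1 p2)
  have hgap : ∀ l : ℕ, ∀ p : ℤ × ℤ, l ≤ k + 8 → dist c (cI (l, p)) ≤ 2 →
      g ≤ |dist c (cI (l, p)) - rad l| := by
    intro l p hl hd
    calc g ≤ G.inf' hGne (fun i => |dist c (cI i) - rad i.1|) := min_le_right _ _
    _ ≤ |dist c (cI (l, p)) - rad l| := Finset.inf'_le _ (by
        rw [hG]
        exact Finset.mem_biUnion.2 ⟨l, Finset.mem_range.2 (by omega),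
          Finset.mem_image.2 ⟨p, mem_boxF hd, rfl⟩⟩)
  -- choose the deep level J
  obtain ⟨n, hn⟩ := exists_pow_lt_of_lt_one
    (show (0:ℝ) < min (g/8) (δ/8) by positivity) (show (1/2:ℝ) < 1 by norm_num)
  set J := max (k+2) n with hJdef
  have hradJsmall : rad J < min (g/8) (δ/8) := by
    calc rad J ≤ rad n := rad_anti (le_max_right _ _)
    _ ≤ (1/2)^n / 100 := rad_le_pow n
    _ ≤ (1/2)^n := by
        have : (0:ℝ) < (1/2:ℝ)^n := by positivity
        linarith
    _ < min (g/8) (δ/8) := hn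
  have hJk : k + 2 ≤ J := le_max_left _ _
  have h4g : 4 * rad J < g := by
    have h1 : rad J < g/8 := lt_of_lt_of_le hradJsmall (min_le_left _ _)
    linarith [rad_pos J]
  have h4g' : 4 * rad (J+1) < g := by
    have := rad_anti (show J ≤ J+1 by omega)
    linarith
  obtain ⟨y, hyE, hyx, hyc, hyK⟩ := annulus_pick (b := b) x hgap hJk h4g
  obtain ⟨y', hyE', hyx', hyc', hyK'⟩ := annulus_pick (b := b) x hgap
    (show k+2 ≤ J+1 by omega) h4g'
  have hknew : cI (J+1, a * 2^(J+1-k), b * 2^(J+1-k)) = ctr k a b :=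
    ctr_lift (by omega) a b
  have hfin : (SCset (ctr k a b) (rad J)).Finite := SC_finite
  have hnotmem : (J+1, a * 2^(J+1-k), b * 2^(J+1-k)) ∉ SCset (ctr k a b) (rad J) := by
    intro hmem
    have h2 := ball_subset_ball_dist (rad_pos J) hmem
    rw [hknew, dist_self] at h2
    have h3 : rI (J+1, a * 2^(J+1-k), b * 2^(J+1-k)) = rad (J+1) := rfl
    rw [h3] at h2
    have := rad_succ_le J
    linarith [rad_pos J]
  have hcount : (Kset y').ncard = (Kset y).ncard + 1 := by
    rw [hyK, hyK', SC_succ hgap hJk h4g]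
    exact Set.ncard_insert_of_notMem hnotmem hfin
  have hyZ : y ∈ ZZ ↔ Odd (Kset y).ncard := Iff.rfl
  have hy'Z : y' ∈ ZZ ↔ ¬ Odd (Kset y).ncard := by
    have h1 : y' ∈ ZZ ↔ Odd (Kset y').ncard := Iff.rfl
    rw [h1, hcount, Nat.odd_add_one]
  have hdy : dist y x < δ := by
    calc dist y x ≤ dist y c + dist c x := dist_triangle _ _ _
    _ = dist y c + dist x c := by rw [dist_comm c x]
    _ < rad J + 2 * (1/2)^k := by
        have := hyc
        rw [← hc] at this
        linarith
    _ < δ := by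
        have h1 : rad J < δ/8 := lt_of_lt_of_le hradJsmall (min_le_right _ _)
        linarith
  have hdy' : dist y' x < δ := by
    calc dist y' x ≤ dist y' c + dist c x := dist_triangle _ _ _
    _ = dist y' c + dist x c := by rw [dist_comm c x]
    _ < rad (J+1) + 2 * (1/2)^k := by
        have := hyc'
        rw [← hc] at this
        linarith
    _ < δ := by
        have h1 : rad J < δ/8 := lt_of_lt_of_le hradJsmall (min_le_right _ _)
        have h2 : rad (J+1) ≤ rad J := rad_anti (by omega)
        linarith
  by_cases hOdd : Odd (Kset y).ncard
  · by_cases hxZ : x ∈ ZZ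
    · exact ⟨y', hyE', hyx', hdy', iff_of_false (fun hy' => (hy'Z.1 hy') hOdd)
        (fun hx => hx hxZ)⟩
    · exact ⟨y, hyE, hyx, hdy, iff_of_true (hyZ.2 hOdd) hxZ⟩
  · by_cases hxZ : x ∈ ZZ
    · exact ⟨y, hyE, hyx, hdy, iff_of_false (fun hy => hOdd (hyZ.1 hy)) (fun hx => hx hxZ)⟩
    · exact ⟨y', hyE', hyx', hdy', iff_of_true (hy'Z.2 hOdd) hxZ⟩


theorem not_lip (x : E2) : ¬ LipAtRel ff x EE := by
  unfold LipAtRel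
  push_neg
  constructor
  · -- x is a limit point of EE \ {x}
    rw [Metric.mem_closure_iff]
    intro t ht
    obtain ⟨y, hyE, hyx, hyd, _⟩ := witness x ht
    refine ⟨y, ⟨hyE, by simp [hyx]⟩, ?_⟩
    rw [dist_comm]
    exact hyd
  · -- the quotient is unbounded
    intro hbd
    obtain ⟨C, hC⟩ := hbd
    rw [Filter.eventually_map, eventually_nhdsWithin_iff, Metric.eventually_nhds_iff] at hC
    obtain ⟨t, ht, hC⟩ := hC
    have hpos : (0:ℝ) < min t (1/(|C|+1)) := lt_min ht (by positivity)
    obtain ⟨y, hyE, hyx, hyd, hyZ⟩ := witness x hpos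
    have h1 : |ff y - ff x| = 1 := by
      by_cases hx : x ∈ ZZ
      · have hy : y ∉ ZZ := fun hy => (hyZ.1 hy) hx
        rw [ff, Set.indicator_of_notMem hy, Set.indicator_of_mem hx]
        norm_num
      · have hy : y ∈ ZZ := hyZ.2 hx
        rw [ff, Set.indicator_of_mem hy, Set.indicator_of_notMem hx]
        norm_num
    have h2 := hC (show dist y x < t from lt_of_lt_of_le hyd (min_le_left _ _))
      ⟨hyE, by simp [hyx]⟩
    rw [h1] at h2
    have h3 : ‖y - x‖ < 1/(|C|+1) := by
      rw [← dist_eq_norm]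
      exact lt_of_lt_of_le hyd (min_le_right _ _)
    have h4 : 0 < ‖y - x‖ := by
      rw [norm_pos_iff, sub_ne_zero]
      exact hyx
    have h5 : |C| + 1 < 1/‖y - x‖ := by
      rw [lt_div_iff₀ h4]
      calc (|C|+1) * ‖y-x‖ < (|C|+1) * (1/(|C|+1)) := by
            apply mul_lt_mul_of_pos_left h3 (by positivity)
      _ = 1 := by field_simp
    have h6 : 1/‖y - x‖ ≤ C := h2
    have h7 : C ≤ |C| := le_abs_self C
    linarith

end Hedge


/-- There are sets `Z, E ⊆ ℝ²` with `|ℝ² \ E| = 0` such that `χ_Z` is differentiable in almost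
every direction at every point of `E`, yet `χ_Z` is nowhere Lipschitz relative to `E`. -/
theorem stmt2 : ∃ Z E : Set E2,
    volume (Set.univ \ E) = 0 ∧
    (∀ x ∈ E, DiffAEDirs (Set.indicator Z (fun _ => (1 : ℝ))) x) ∧
    (∀ x : E2, ¬ LipAtRel (Set.indicator Z (fun _ => (1 : ℝ))) x E) := by
  refine ⟨Hedge.ZZ, Hedge.EE, Hedge.EE_conull, ?_, ?_⟩
  · intro x hx
    exact Hedge.diff_at_E hx
  · intro x
    exact Hedge.not_lip x
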